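/- For every n ∈ ℕ, ρ^{n+1} ≤ ρⁿ, where ρⁿ is the infimum over all 2ⁿ×2ⁿ stochastic matrices p of max_{m∈{1,…,2ⁿ}} Σ_{h=1}^{2ⁿ} 2ⁿ λ^{(n)}_h p_{h,m} / μ^{*(n)}_{h,m}. -/

import Mathlib

open MeasureTheory Set Finset

/-- Integral of the arrival rate function over the `h`-th dyadic subinterval of
`[0,1]` at level `n`: `λ^{(n)}_h = ∫_{h/2ⁿ}^{(h+1)/2ⁿ} λ(x) dx`. -/
noncomputable def lamDyadic (lam : ℝ → ℝ) (n : ℕ) (h : Fin (2 ^ n)) : ℝ :=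
  ∫ x in (((h : ℕ) : ℝ) / 2 ^ n)..((((h : ℕ) : ℝ) + 1) / 2 ^ n), lam x

/-- Minimum of `f` on the dyadic square
`[h/2ⁿ,(h+1)/2ⁿ] × [m/2ⁿ,(m+1)/2ⁿ]`, realized as the `sInf` of the image. -/
noncomputable def muStarDyadic (f : ℝ × ℝ → ℝ) (n : ℕ) (h m : Fin (2 ^ n)) : ℝ :=
  sInf (f '' (Icc (((h : ℕ) : ℝ) / 2 ^ n) ((((h : ℕ) : ℝ) + 1) / 2 ^ n) ×ˢ
              Icc (((m : ℕ) : ℝ) / 2 ^ n) ((((m : ℕ) : ℝ) + 1) / 2 ^ n)))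

section Aux
variable (f : ℝ × ℝ → ℝ) (lam : ℝ → ℝ)

lemma dyadic_le (n : ℕ) (h : Fin (2 ^ n)) :
    (((h : ℕ) : ℝ) / 2 ^ n) ≤ ((((h : ℕ) : ℝ) + 1) / 2 ^ n) := by
  apply div_le_div_of_nonneg_right (by linarith) (by positivity)

lemma dyadic_subset (n : ℕ) (h : Fin (2 ^ n)) :
    Icc (((h : ℕ) : ℝ) / 2 ^ n) ((((h : ℕ) : ℝ) + 1) / 2 ^ n) ⊆ Icc (0:ℝ) 1 := by
  apply Set.Icc_subset_Icc
  · positivity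
  · rw [div_le_one (by positivity)]
    have : (h : ℕ) + 1 ≤ 2 ^ n := h.2
    calc ((h:ℕ):ℝ) + 1 = (((h:ℕ) + 1 : ℕ) : ℝ) := by push_cast; ring
    _ ≤ ((2^n : ℕ) : ℝ) := by exact_mod_cast Nat.cast_le.mpr this
    _ = (2:ℝ)^n := by push_cast; ring

lemma dyadic_square_subset (n : ℕ) (h m : Fin (2 ^ n)) :
    (Icc (((h : ℕ) : ℝ) / 2 ^ n) ((((h : ℕ) : ℝ) + 1) / 2 ^ n) ×ˢ
     Icc (((m : ℕ) : ℝ) / 2 ^ n) ((((m : ℕ) : ℝ) + 1) / 2 ^ n)) ⊆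
    Icc (0:ℝ) 1 ×ˢ Icc (0:ℝ) 1 :=
  prod_mono (dyadic_subset n h) (dyadic_subset n m)

lemma dyadic_square_compact (n : ℕ) (h m : Fin (2 ^ n)) :
    IsCompact (Icc (((h : ℕ) : ℝ) / 2 ^ n) ((((h : ℕ) : ℝ) + 1) / 2 ^ n) ×ˢ
     Icc (((m : ℕ) : ℝ) / 2 ^ n) ((((m : ℕ) : ℝ) + 1) / 2 ^ n)) :=
  (isCompact_Icc).prod isCompact_Icc

lemma dyadic_square_nonempty (n : ℕ) (h m : Fin (2 ^ n)) :
    (Icc (((h : ℕ) : ℝ) / 2 ^ n) ((((h : ℕ) : ℝ) + 1) / 2 ^ n) ×ˢ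
     Icc (((m : ℕ) : ℝ) / 2 ^ n) ((((m : ℕ) : ℝ) + 1) / 2 ^ n)).Nonempty :=
  Set.Nonempty.prod (nonempty_Icc.mpr (dyadic_le n h)) (nonempty_Icc.mpr (dyadic_le n m))

lemma muStar_pos (hf : ContinuousOn f (Icc (0:ℝ) 1 ×ˢ Icc (0:ℝ) 1))
    (hfpos : ∀ z ∈ Icc (0:ℝ) 1 ×ˢ Icc (0:ℝ) 1, 0 < f z)
    (n : ℕ) (h m : Fin (2 ^ n)) : 0 < muStarDyadic f n h m := by
  have hsub := dyadic_square_subset n h m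
  have hK := dyadic_square_compact n h m
  have hcomp : IsCompact (f '' _) := hK.image_of_continuousOn (hf.mono hsub)
  have hne : (f '' _).Nonempty := (dyadic_square_nonempty n h m).image f
  obtain ⟨z, hz, hzz⟩ := hcomp.sInf_mem hne
  rw [muStarDyadic, ← hzz]
  exact hfpos z (hsub hz)

lemma lamDyadic_nonneg (hlam : ∀ x ∈ Icc (0:ℝ) 1, 0 ≤ lam x) (n : ℕ) (h : Fin (2 ^ n)) :
    0 ≤ lamDyadic lam n h := by
  apply intervalIntegral.integral_nonneg (dyadic_le n h)
  intro u hu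
  exact hlam u (dyadic_subset n h hu)

end Aux

def halve (n : ℕ) (i : Fin (2 ^ (n+1))) : Fin (2 ^ n) :=
  ⟨(i : ℕ) / 2, by have := i.2; omega⟩

def pairEquiv (n : ℕ) : Fin (2 ^ n) × Fin 2 ≃ Fin (2 ^ (n + 1)) where
  toFun x := ⟨2 * (x.1 : ℕ) + (x.2 : ℕ), by have h1 := x.1.2; have h2 := x.2.2; omega⟩
  invFun i := (halve n i, ⟨(i : ℕ) % 2, Nat.mod_lt _ (by omega)⟩)
  left_inv x := by
    rcases x with ⟨a, b⟩
    have h2 := b.2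
    simp only [halve]
    ext <;> simp <;> omega
  right_inv i := by
    simp only [halve]
    ext
    simp
    omega

@[simp] lemma halve_pairEquiv (n : ℕ) (a : Fin (2 ^ n)) (b : Fin 2) :
    halve n (pairEquiv n (a, b)) = a := by
  have hb := b.2
  ext
  simp [halve, pairEquiv]
  omega

lemma pairEquiv_val (n : ℕ) (a : Fin (2 ^ n)) (b : Fin 2) :
    ((pairEquiv n (a, b) : ℕ) : ℝ) = 2 * (a : ℕ) + (b : ℕ) := by
  simp [pairEquiv]

lemma intInt (lam : ℝ → ℝ) (hint : IntegrableOn lam (Icc 0 1)) {a b : ℝ}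
    (h0 : 0 ≤ a) (hab : a ≤ b) (h1 : b ≤ 1) : IntervalIntegrable lam volume a b := by
  have : IntegrableOn lam (Set.uIcc a b) := by
    rw [Set.uIcc_of_le hab]
    exact hint.mono_set (Set.Icc_subset_Icc h0 h1)
  exact this.intervalIntegrable

lemma two_a_le (n : ℕ) (a : Fin (2 ^ n)) : (2 * (a:ℕ) + 2 : ℝ) ≤ 2 ^ (n+1) := by
  have : (a:ℕ) + 1 ≤ 2 ^ n := a.2
  have : ((a:ℕ) : ℝ) + 1 ≤ 2 ^ n := by exact_mod_cast this
  calc (2 * (a:ℕ) + 2 : ℝ) = 2 * ((a:ℕ) + 1) := by ring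
  _ ≤ 2 * 2 ^ n := by linarith
  _ = 2 ^ (n+1) := by ring

lemma lam_split (lam : ℝ → ℝ) (hint : IntegrableOn lam (Icc 0 1)) (n : ℕ) (a : Fin (2 ^ n)) :
    lamDyadic lam (n+1) (pairEquiv n (a, 0)) + lamDyadic lam (n+1) (pairEquiv n (a, 1))
      = lamDyadic lam n a := by
  have h2 := two_a_le n a
  unfold lamDyadic
  rw [pairEquiv_val, pairEquiv_val]
  have e0 : ((0 : Fin 2) : ℕ) = 0 := rfl
  have e1 : ((1 : Fin 2) : ℕ) = 1 := rfl
  rw [e0, e1]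
  push_cast
  have ha : ((a:ℕ):ℝ) / 2 ^ n = (2 * (a:ℕ) + 0) / 2 ^ (n+1) := by ring
  have hb : (((a:ℕ):ℝ) + 1) / 2 ^ n = (2 * (a:ℕ) + 1 + 1) / 2 ^ (n+1) := by ring
  rw [ha, hb]
  have hA : (0:ℝ) ≤ (2 * (a:ℕ) + 0) / 2 ^ (n+1) := by positivity
  have hAB : ((2:ℝ) * (a:ℕ) + 0) / 2 ^ (n+1) ≤ (2 * (a:ℕ) + 0 + 1) / 2 ^ (n+1) := by
    apply div_le_div_of_nonneg_right (by linarith) (by positivity)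
  have hBC : ((2:ℝ) * (a:ℕ) + 0 + 1) / 2 ^ (n+1) ≤ (2 * (a:ℕ) + 1 + 1) / 2 ^ (n+1) := by
    apply div_le_div_of_nonneg_right (by linarith) (by positivity)
  have hC1 : ((2:ℝ) * (a:ℕ) + 1 + 1) / 2 ^ (n+1) ≤ 1 := by
    rw [div_le_one (by positivity)]; linarith
  have i1 : IntervalIntegrable lam volume ((2 * (a:ℕ) + 0) / 2 ^ (n+1))
      ((2 * (a:ℕ) + 0 + 1) / 2 ^ (n+1)) := intInt lam hint hA hAB (le_trans hBC hC1)
  have i2 : IntervalIntegrable lam volume ((2 * (a:ℕ) + 0 + 1) / 2 ^ (n+1))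
      ((2 * (a:ℕ) + 1 + 1) / 2 ^ (n+1)) := intInt lam hint (le_trans hA hAB) hBC hC1
  have := intervalIntegral.integral_add_adjacent_intervals i1 i2
  convert this using 3 <;> ring

lemma muStar_mono (f : ℝ × ℝ → ℝ) (hf : ContinuousOn f (Icc (0:ℝ) 1 ×ˢ Icc (0:ℝ) 1))
    (n : ℕ) (h' m' : Fin (2 ^ (n+1))) :
    muStarDyadic f n (halve n h') (halve n m') ≤ muStarDyadic f (n+1) h' m' := by
  have hfine_sub : ∀ (i : Fin (2 ^ (n+1))),
      Icc (((i:ℕ):ℝ) / 2 ^ (n+1)) ((((i:ℕ):ℝ) + 1) / 2 ^ (n+1)) ⊆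
      Icc (((halve n i : ℕ):ℝ) / 2 ^ n) ((((halve n i : ℕ):ℝ) + 1) / 2 ^ n) := by
    intro i
    apply Set.Icc_subset_Icc
    · have hnat : (2 * ((i:ℕ)/2) : ℕ) ≤ (i:ℕ) := by omega
      have : ((2 * ((i:ℕ)/2) : ℕ) : ℝ) ≤ ((i:ℕ):ℝ) := by exact_mod_cast hnat
      calc (((halve n i : ℕ):ℝ)) / 2 ^ n = ((2 * ((i:ℕ)/2) : ℕ) : ℝ) / 2 ^ (n+1) := by
            simp only [halve]; push_cast; ring
      _ ≤ ((i:ℕ):ℝ) / 2 ^ (n+1) := by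
            apply div_le_div_of_nonneg_right this (by positivity)
    · have hnat : (i:ℕ) + 1 ≤ 2 * ((i:ℕ)/2) + 2 := by omega
      have hc : ((i:ℕ):ℝ) + 1 ≤ 2 * (((i:ℕ)/2 : ℕ):ℝ) + 2 := by exact_mod_cast hnat
      calc (((i:ℕ):ℝ) + 1) / 2 ^ (n+1) ≤ (2 * (((i:ℕ)/2 : ℕ):ℝ) + 2) / 2 ^ (n+1) := by
            apply div_le_div_of_nonneg_right hc (by positivity)
      _ = (((halve n i : ℕ):ℝ) + 1) / 2 ^ n := by simp only [halve]; push_cast; ring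
  apply csInf_le_csInf
  · exact ((dyadic_square_compact n (halve n h') (halve n m')).image_of_continuousOn
      (hf.mono (dyadic_square_subset n _ _))).bddBelow
  · exact (dyadic_square_nonempty (n+1) h' m').image f
  · exact Set.image_mono (Set.prod_mono (hfine_sub h') (hfine_sub m'))

/-- A matrix with entries in `[0,1]` and unit row sums. -/
def IsStochastic {H M : ℕ} (p : Fin H → Fin M → ℝ) : Prop :=
  (∀ h m, 0 ≤ p h m ∧ p h m ≤ 1) ∧ ∀ h, ∑ m, p h m = 1

/-- `ρⁿ`: the infimum over all `2ⁿ×2ⁿ` stochastic matrices `p` of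
`max_m Σ_h 2ⁿ λ^{(n)}_h p_{h,m} / μ^{*(n)}_{h,m}`. -/
noncomputable def rhoStar (f : ℝ × ℝ → ℝ) (lam : ℝ → ℝ) (n : ℕ) : ℝ :=
  sInf { r : ℝ | ∃ p : Fin (2 ^ n) → Fin (2 ^ n) → ℝ, IsStochastic p ∧
    r = ⨆ m : Fin (2 ^ n), ∑ h : Fin (2 ^ n),
      (2 ^ n : ℝ) * lamDyadic lam n h * p h m / muStarDyadic f n h m }

/-- `ρ^{n+1} ≤ ρⁿ` for every `n` (monotonicity of the worst-case
dyadic load under refinement, first claim of Lemma C.1). -/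
theorem stmt10 (f : ℝ × ℝ → ℝ)
    (hf : ContinuousOn f (Icc (0:ℝ) 1 ×ˢ Icc (0:ℝ) 1))
    (hfpos : ∀ z ∈ Icc (0:ℝ) 1 ×ˢ Icc (0:ℝ) 1, 0 < f z)
    (lam : ℝ → ℝ) (hlam : ∀ x ∈ Icc (0:ℝ) 1, 0 ≤ lam x)
    (hint : IntegrableOn lam (Icc 0 1)) (n : ℕ) :
    rhoStar f lam (n + 1) ≤ rhoStar f lam n := by
  have hμpos := muStar_pos f hf hfpos
  have hlamnn := lamDyadic_nonneg lam hlam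
  -- nonemptiness of Fin types
  have hfin : ∀ k : ℕ, Nonempty (Fin (2 ^ k)) := fun k => ⟨⟨0, by positivity⟩⟩
  -- value of a stochastic matrix at level k
  set V : ∀ k, (Fin (2^k) → Fin (2^k) → ℝ) → ℝ := fun k p =>
    ⨆ m : Fin (2 ^ k), ∑ h : Fin (2 ^ k),
      (2 ^ k : ℝ) * lamDyadic lam k h * p h m / muStarDyadic f k h m with hV
  -- each term is nonneg for nonneg matrices
  have hterm_nn : ∀ k (p : Fin (2^k) → Fin (2^k) → ℝ), (∀ h m, 0 ≤ p h m) →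
      ∀ h m, 0 ≤ (2 ^ k : ℝ) * lamDyadic lam k h * p h m / muStarDyadic f k h m := by
    intro k p hp h m
    apply div_nonneg _ (hμpos k h m).le
    have := hlamnn k h
    have := hp h m
    positivity
  -- the fine set is bounded below by 0
  have hbdd : ∀ k : ℕ, BddBelow { r : ℝ | ∃ p : Fin (2 ^ k) → Fin (2 ^ k) → ℝ,
      ((∀ h m, 0 ≤ p h m ∧ p h m ≤ 1) ∧ ∀ h, ∑ m, p h m = 1) ∧ r = V k p } := by
    intro k
    refine ⟨0, ?_⟩
    rintro r ⟨p, ⟨hp01, _⟩, rfl⟩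
    have := hfin k
    obtain ⟨m0⟩ := this
    calc (0:ℝ) ≤ ∑ h : Fin (2^k), (2 ^ k : ℝ) * lamDyadic lam k h * p h m0 / muStarDyadic f k h m0 :=
          Finset.sum_nonneg fun h _ => hterm_nn k p (fun h m => (hp01 h m).1) h m0
    _ ≤ V k p := by simp only [hV]; apply le_ciSup (Set.Finite.bddAbove (Set.finite_range _)) m0
  -- nonemptiness of the coarse set: uniform matrix
  have hne : { r : ℝ | ∃ p : Fin (2 ^ n) → Fin (2 ^ n) → ℝ,
      ((∀ h m, 0 ≤ p h m ∧ p h m ≤ 1) ∧ ∀ h, ∑ m, p h m = 1) ∧ r = V n p }.Nonempty := by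
    refine ⟨V n (fun _ _ => ((2:ℝ) ^ n)⁻¹), fun _ _ => ((2:ℝ) ^ n)⁻¹, ⟨⟨?_, ?_⟩, rfl⟩⟩
    · intro h m
      constructor
      · positivity
      · rw [inv_le_one_iff₀]
        right
        exact one_le_pow₀ (by norm_num)
    · intro h
      rw [Finset.sum_const, Finset.card_univ, Fintype.card_fin]
      rw [nsmul_eq_mul]
      push_cast
      rw [mul_inv_cancel₀ (by positivity)]
  rw [rhoStar, rhoStar]
  apply le_csInf hne
  rintro r ⟨p, ⟨hp01, hprow⟩, rfl⟩
  -- the refined matrix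
  set p' : Fin (2 ^ (n+1)) → Fin (2 ^ (n+1)) → ℝ :=
    fun h' m' => p (halve n h') (halve n m') / 2 with hp'def
  have hp'01 : ∀ h m, 0 ≤ p' h m ∧ p' h m ≤ 1 := by
    intro h m
    constructor
    · have := (hp01 (halve n h) (halve n m)).1; simp only [hp'def]; linarith
    · have := (hp01 (halve n h) (halve n m)).2; simp only [hp'def]; linarith
  have hp'row : ∀ h', ∑ m', p' h' m' = 1 := by
    intro h'
    have := Fintype.sum_equiv (pairEquiv n) (fun x => p' h' (pairEquiv n x)) (fun m' => p' h' m')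
      (fun _ => rfl)
    rw [← this, Fintype.sum_prod_type]
    simp only [hp'def, halve_pairEquiv]
    rw [Finset.sum_congr rfl (fun a _ => Fin.sum_univ_two (fun b => p (halve n h') a / 2))]
    have : ∀ a : Fin (2^n), p (halve n h') a / 2 + p (halve n h') a / 2 = p (halve n h') a :=
      fun a => by ring
    rw [Finset.sum_congr rfl (fun a _ => this a)]
    exact hprow (halve n h')
  have hmem : V (n+1) p' ∈ { r : ℝ | ∃ q : Fin (2 ^ (n+1)) → Fin (2 ^ (n+1)) → ℝ,
      ((∀ h m, 0 ≤ q h m ∧ q h m ≤ 1) ∧ ∀ h, ∑ m, q h m = 1) ∧ r = V (n+1) q } :=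
    ⟨p', ⟨hp'01, hp'row⟩, rfl⟩
  refine le_trans (csInf_le (hbdd (n+1)) hmem) ?_
  -- show V (n+1) p' ≤ V n p
  have := hfin (n+1)
  apply ciSup_le
  intro m'
  have key : ∑ h' : Fin (2 ^ (n+1)),
      (2 ^ (n+1) : ℝ) * lamDyadic lam (n+1) h' * p' h' m' / muStarDyadic f (n+1) h' m'
      ≤ ∑ h : Fin (2 ^ n),
      (2 ^ n : ℝ) * lamDyadic lam n h * p h (halve n m') / muStarDyadic f n h (halve n m') := by
    have step1 : ∀ h' : Fin (2 ^ (n+1)),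
        (2 ^ (n+1) : ℝ) * lamDyadic lam (n+1) h' * p' h' m' / muStarDyadic f (n+1) h' m'
        ≤ (2 ^ (n+1) : ℝ) * lamDyadic lam (n+1) h' * p' h' m' /
            muStarDyadic f n (halve n h') (halve n m') := by
      intro h'
      apply div_le_div_of_nonneg_left _ (hμpos n _ _) (muStar_mono f hf n h' m')
      have := hlamnn (n+1) h'
      have := (hp'01 h' m').1
      positivity
    refine le_trans (Finset.sum_le_sum fun h' _ => step1 h') ?_
    have hre := Fintype.sum_equiv (pairEquiv n)
      (fun x => (2 ^ (n+1) : ℝ) * lamDyadic lam (n+1) (pairEquiv n x) * p' (pairEquiv n x) m' /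
        muStarDyadic f n (halve n (pairEquiv n x)) (halve n m'))
      (fun h' => (2 ^ (n+1) : ℝ) * lamDyadic lam (n+1) h' * p' h' m' /
        muStarDyadic f n (halve n h') (halve n m')) (fun _ => rfl)
    rw [← hre, Fintype.sum_prod_type]
    apply le_of_eq
    apply Finset.sum_congr rfl
    intro a _
    rw [Fin.sum_univ_two]
    simp only [hp'def, halve_pairEquiv]
    have hsplit := lam_split lam hint n a
    have hμne : muStarDyadic f n a (halve n m') ≠ 0 := (hμpos n a (halve n m')).ne'
    rw [← hsplit]
    field_simp
    ring
  refine le_trans key ?_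
  simp only [hV]
  exact le_ciSup (f := fun m => ∑ h : Fin (2 ^ n),
    (2 ^ n : ℝ) * lamDyadic lam n h * p h m / muStarDyadic f n h m)
    (Set.Finite.bddAbove (Set.finite_range _)) (halve n m')
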